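/- Let $(\mathcal{A},[~,~],\omega)$ be a symplectic mock-Lie algebra and $r\in\mathcal{A}\otimes\mathcal{A}$ such that: $(\mathcal{A},[~,~],r,\Delta_r)$ is a quasitriangular mock-Lie bialgebra with $\Delta_r(x)=[x,r^1]\otimes r^2 - r^1\otimes[x,r^2]$, and $(\mathcal{A},\Delta_r,\omega,[~,~]_\omega)$ is a dual quasitriangular mock-Lie bialgebra with $[x,y]_\omega = x_{(1)}\omega(x_{(2)},y)-y_{(1)}\omega(x,y_{(2)})$ (Sweedler notation for $\Delta_r$). Then the map $N(x) = \omega(x,r^1)r^2$ is a Nijenhuis operator on $(\mathcal{A},[~,~])$, i.e. $[N(x),N(y)] + N^2([x,y]) = N([N(x),y]) + N([x,N(y)])$ for all $x,y$. -/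
import Mathlib


open TensorProduct LinearMap Module

/-- `Δ_r(x) = [x,r¹]⊗r² - r¹⊗[x,r²]` for `r = ∑ i, r1 i ⊗ r2 i`. -/
noncomputable def DeltaR {K A ι : Type*} [Field K] [AddCommGroup A] [Module K A]
    [Fintype ι] (b : A →ₗ[K] A →ₗ[K] A) (r1 r2 : ι → A) (x : A) : A ⊗[K] A :=
  ∑ i, (b x (r1 i)) ⊗ₜ[K] r2 i - ∑ i, r1 i ⊗ₜ[K] (b x (r2 i))

/-- `f(w₁)·g(w₂)` for `w = w₁ ⊗ w₂ ∈ A ⊗ A`. -/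
noncomputable def pair2 {K A : Type*} [Field K] [AddCommGroup A] [Module K A]
    (f g : Dual K A) (w : A ⊗[K] A) : K :=
  (TensorProduct.lid K K) ((TensorProduct.map f g) w)

/-- The map `N(x) = ω(x, r¹) r²`. -/
noncomputable def Nw {K A ι : Type*} [Field K] [AddCommGroup A] [Module K A]
    [Fintype ι] (ω : A →ₗ[K] A →ₗ[K] K) (r1 r2 : ι → A) (x : A) : A :=
  ∑ i, (ω x (r1 i)) • r2 i

/-- Let `(A,[,],ω)` be a symplectic mock-Lie algebra and `r` antisymmetric such that
`(A,[,],r,Δ_r)` is quasitriangular (`r` solves the cmLYBe) and `(A,Δ_r,ω,[,]_ω)` is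
dual quasitriangular (`ω` solves the ccmLYBe in `(A,Δ_r)`). Then `N(x) = ω(x,r¹)r²`
is a Nijenhuis operator on `(A,[,])`. -/
theorem stmt9 {K A ι : Type*} [Field K] [CharZero K]
    [AddCommGroup A] [Module K A] [Fintype ι]
    (b : A →ₗ[K] A →ₗ[K] A) (ω : A →ₗ[K] A →ₗ[K] K) (r1 r2 : ι → A)
    (hcomm : ∀ x y : A, b x y = b y x)
    (hjac : ∀ x y z : A, b x (b y z) + b y (b z x) + b z (b x y) = 0)
    (hskew : ∀ x y : A, ω x y = - ω y x)
    (hsymp : ∀ x y z : A, ω (b x y) z + ω (b y z) x + ω (b z x) y = 0)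
    (hanti : (TensorProduct.comm K A A) (∑ i, r1 i ⊗ₜ[K] r2 i) =
      - ∑ i, r1 i ⊗ₜ[K] r2 i)
    (hcybe : ∑ i, ∑ j, (b (r1 i) (r1 j)) ⊗ₜ[K] (r2 i ⊗ₜ[K] r2 j) +
      ∑ i, ∑ j, r1 i ⊗ₜ[K] (r1 j ⊗ₜ[K] (b (r2 i) (r2 j))) -
      ∑ i, ∑ j, r1 i ⊗ₜ[K] ((b (r1 j) (r2 i)) ⊗ₜ[K] r2 j) = 0)
    (hccybe : ∀ x y z : A,
      pair2 (ω.flip y) (ω.flip z) (DeltaR b r1 r2 x) +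
        pair2 (ω x) (ω y) (DeltaR b r1 r2 z) -
        pair2 (ω x) (ω.flip z) (DeltaR b r1 r2 y) = 0) :
    ∀ x y : A,
      b (Nw ω r1 r2 x) (Nw ω r1 r2 y) + Nw ω r1 r2 (Nw ω r1 r2 (b x y)) =
        Nw ω r1 r2 (b (Nw ω r1 r2 x) y) + Nw ω r1 r2 (b x (Nw ω r1 r2 y)) := by
  intro x y
  -- scalar form of the co-classical YBE
  have hc : ∀ x y z : A,
      ∑ i, ω (b x (r1 i)) y * ω (r2 i) z + ∑ i, ω y (r1 i) * ω (b x (r2 i)) z +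
        (∑ i, ω x (b (r1 i) z) * ω y (r2 i) - ∑ i, ω x (r1 i) * ω y (b z (r2 i))) -
        (∑ i, ω x (b y (r1 i)) * ω (r2 i) z - ∑ i, ω x (r1 i) * ω (b (r2 i) y) z) = 0 := by
    intro x y z
    have h := hccybe x y z
    simp only [pair2, DeltaR, map_sub, map_sum, TensorProduct.map_tmul,
      TensorProduct.lid_tmul, smul_eq_mul, LinearMap.flip_apply] at h
    have hsk : ∀ i : ι, ω (r1 i) y = -(ω y (r1 i)) := fun i => hskew _ _
    have hcm1 : ∀ i : ι, b z (r1 i) = b (r1 i) z := fun i => hcomm _ _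
    have hcm2 : ∀ i : ι, b y (r2 i) = b (r2 i) y := fun i => hcomm _ _
    simp only [hsk, hcm1, hcm2, neg_mul, Finset.sum_neg_distrib] at h
    linear_combination h
  -- symplectic identity, summed form
  have hss : ∀ (x y z : A),
      ∑ i, ω (b x y) (r1 i) * ω (r2 i) z =
        ∑ i, ω x (b y (r1 i)) * ω (r2 i) z - ∑ i, ω (b x (r1 i)) y * ω (r2 i) z := by
    intro x y z
    rw [← Finset.sum_sub_distrib]
    refine Finset.sum_congr rfl fun i _ => ?_
    have h1 := hsymp x y (r1 i)
    rw [hskew (b y (r1 i)) x, hcomm (r1 i) x] at h1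
    linear_combination (ω (r2 i) z) * h1
  -- A-valued consequence of the classical YBE
  have key := congrArg (fun w => (TensorProduct.lid K A).toLinearMap
    ((TensorProduct.map (ω x) ((TensorProduct.lid K A).toLinearMap ∘ₗ
      TensorProduct.map (ω y) (LinearMap.id))) w)) hcybe
  simp only [map_sub, map_add, map_sum, TensorProduct.map_tmul, coe_comp, Function.comp_apply,
    LinearEquiv.coe_coe, TensorProduct.lid_tmul, LinearMap.id_coe, id_eq, map_smul,
    map_zero, smul_smul] at key
  have key' : (∑ i : ι, ∑ j : ι, ((ω x) (r1 i) * (ω y) (r1 j)) • (b (r2 i)) (r2 j)) =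
      (∑ i : ι, ∑ j : ι, ((ω x) (r1 i) * (ω y) ((b (r1 j)) (r2 i))) • r2 j) -
        ∑ i : ι, ∑ j : ι, ((ω x) ((b (r1 i)) (r1 j)) * (ω y) (r2 i)) • r2 j := by
    rw [eq_sub_iff_add_eq, add_comm]
    exact sub_eq_zero.mp key
  simp only [Nw, map_sum, map_smul, LinearMap.sum_apply, LinearMap.smul_apply,
    Finset.smul_sum, Finset.sum_smul, smul_smul, smul_eq_mul]
  have hT1 : (∑ i : ι, ∑ j : ι, ((ω y) (r1 i) * (ω x) (r1 j)) • (b (r2 j)) (r2 i)) =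
      ∑ i : ι, ∑ j : ι, ((ω x) (r1 i) * (ω y) (r1 j)) • (b (r2 i)) (r2 j) := by
    rw [Finset.sum_comm]
    exact Finset.sum_congr rfl fun i _ => Finset.sum_congr rfl fun j _ => by rw [mul_comm]
  rw [hT1, key',
    Finset.sum_comm (f := fun i j => ((ω x) (r1 i) * (ω y) ((b (r1 j)) (r2 i))) • r2 j),
    Finset.sum_comm (f := fun i j => ((ω x) ((b (r1 i)) (r1 j)) * (ω y) (r2 i)) • r2 j)]
  simp only [← Finset.sum_sub_distrib, ← Finset.sum_add_distrib]
  refine Finset.sum_congr rfl fun j _ => ?_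
  simp only [← sub_smul, ← add_smul, ← Finset.sum_smul]
  congr 1
  simp only [Finset.sum_add_distrib, Finset.sum_sub_distrib]
  linear_combination hss x y (r1 j) - hc x y (r1 j)
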